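/- Assume α ≥ β ≥ γ. Then the maximum of T₂ over the interval [0, γ/2] equals α/2 + max{α, β + γ/2}; it is attained at x = 0 when α ≥ β + γ/2 and at x = γ/2 when α ≤ β + γ/2. -/

import Mathlib

open Set

noncomputable section

/-- `AR₂(x) = √(β² + (2x − γ)² − 2β(2x − γ)·cos C)`, where
`cos C = (α² + β² − γ²)/(2αβ)` by the Cosine Law. -/
def AR2 (α β γ : ℝ) (x : ℝ) : ℝ :=
  Real.sqrt (β ^ 2 + (2 * x - γ) ^ 2
    - 2 * β * (2 * x - γ) * ((α ^ 2 + β ^ 2 - γ ^ 2) / (2 * α * β)))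

/-- `CR₁(x) = √(β² + (γ − 2x)² − 2β(γ − 2x)·cos A)`, where
`cos A = (β² + γ² − α²)/(2βγ)` by the Cosine Law. -/
def CR1 (α β γ : ℝ) (x : ℝ) : ℝ :=
  Real.sqrt (β ^ 2 + (γ - 2 * x) ^ 2
    - 2 * β * (γ - 2 * x) * ((β ^ 2 + γ ^ 2 - α ^ 2) / (2 * β * γ)))

/-- Worst-case evacuation cost of OppositeSearch in Configuration 1. -/
def T1 (α β γ : ℝ) (x : ℝ) : ℝ :=
  α / 2 + γ - x + max (AR2 α β γ x) (max β (2 * x - γ))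

/-- Worst-case evacuation cost of OppositeSearch in Configuration 2. -/
def T2 (α β γ : ℝ) (x : ℝ) : ℝ :=
  α / 2 + x + max (CR1 α β γ x) (max β (γ - 2 * x))

lemma CR1_le (α β γ : ℝ) (hα : 0 < α) (hβ : 0 < β) (hγ : 0 < γ)
    (h4 : α ^ 2 ≤ β ^ 2 + γ ^ 2) (hβγ : γ ≤ β) (hαβ : β ≤ α)
    (x : ℝ) (hx0 : 0 ≤ x) (hx1 : x ≤ γ / 2) :
    CR1 α β γ x ≤ max α (β + γ / 2) - x := by
  set M := max α (β + γ / 2) with hM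
  have hM1 : α ≤ M := le_max_left _ _
  have hM2 : β + γ / 2 ≤ M := le_max_right _ _
  have hMx : 0 ≤ M - x := by linarith
  have hE : β ^ 2 + (γ - 2 * x) ^ 2
      - 2 * β * (γ - 2 * x) * ((β ^ 2 + γ ^ 2 - α ^ 2) / (2 * β * γ))
      = β ^ 2 + (γ - 2 * x) ^ 2 - (γ - 2 * x) * (β ^ 2 + γ ^ 2 - α ^ 2) / γ := by
    field_simp
  have key : γ * (β ^ 2 + (γ - 2 * x) ^ 2) - (γ - 2 * x) * (β ^ 2 + γ ^ 2 - α ^ 2)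
      ≤ γ * (M - x) ^ 2 := by
    have hA : 0 ≤ (γ - 2 * x) * (M ^ 2 - α ^ 2) := by
      have : 0 ≤ M ^ 2 - α ^ 2 := by nlinarith
      have h2x : 0 ≤ γ - 2 * x := by linarith
      exact mul_nonneg h2x this
    have hB : 0 ≤ (2 * x) * ((M - γ / 2) ^ 2 - β ^ 2) := by
      have hMb : β ≤ M - γ / 2 := by linarith
      have : 0 ≤ (M - γ / 2) ^ 2 - β ^ 2 := by nlinarith
      positivity
    have hC : 0 ≤ (γ - 2 * x) * (2 * x) := by
      have h2x : 0 ≤ γ - 2 * x := by linarith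
      positivity
    nlinarith [hA, hB, hC, hγ.le, sq_nonneg (γ - 2*x)]
  have hle : β ^ 2 + (γ - 2 * x) ^ 2 - (γ - 2 * x) * (β ^ 2 + γ ^ 2 - α ^ 2) / γ
      ≤ (M - x) ^ 2 := by
    rw [sub_le_iff_le_add, ← sub_le_iff_le_add', le_div_iff₀ hγ]
    nlinarith [key]
  calc CR1 α β γ x ≤ Real.sqrt ((M - x) ^ 2) := by
        unfold CR1; rw [hE]; exact Real.sqrt_le_sqrt hle
    _ = M - x := Real.sqrt_sq hMx

lemma CR1_zero (α β γ : ℝ) (hα : 0 < α) (hβ : 0 < β) (hγ : 0 < γ) :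
    CR1 α β γ 0 = α := by
  unfold CR1
  have : β ^ 2 + (γ - 2 * 0) ^ 2
      - 2 * β * (γ - 2 * 0) * ((β ^ 2 + γ ^ 2 - α ^ 2) / (2 * β * γ)) = α ^ 2 := by
    field_simp
    ring
  rw [this, Real.sqrt_sq hα.le]

lemma CR1_half (α β γ : ℝ) (hβ : 0 < β) :
    CR1 α β γ (γ / 2) = β := by
  unfold CR1
  have : β ^ 2 + (γ - 2 * (γ / 2)) ^ 2
      - 2 * β * (γ - 2 * (γ / 2)) * ((β ^ 2 + γ ^ 2 - α ^ 2) / (2 * β * γ)) = β ^ 2 := by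
    ring
  rw [this, Real.sqrt_sq hβ.le]

/-- Case `α ≥ β ≥ γ`, Configuration 2: the maximum of `T₂` over `[0, γ/2]` is
`α/2 + max {α, β + γ/2}`, attained at `x = 0` when `α ≥ β + γ/2` and at
`x = γ/2` when `α ≤ β + γ/2`. -/
theorem stmt11 (α β γ : ℝ) (hα : 0 < α) (hβ : 0 < β) (hγ : 0 < γ)
    (h1 : α < β + γ) (h2 : β < α + γ) (h3 : γ < α + β)
    (h4 : α ^ 2 ≤ β ^ 2 + γ ^ 2) (h5 : β ^ 2 ≤ α ^ 2 + γ ^ 2)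
    (h6 : γ ^ 2 ≤ α ^ 2 + β ^ 2)
    (hαβ : β ≤ α) (hβγ : γ ≤ β) :
    IsGreatest (T2 α β γ '' Icc 0 (γ / 2)) (α / 2 + max α (β + γ / 2)) ∧
      (β + γ / 2 ≤ α → T2 α β γ 0 = α / 2 + max α (β + γ / 2)) ∧
      (α ≤ β + γ / 2 → T2 α β γ (γ / 2) = α / 2 + max α (β + γ / 2)) := by
  have hT0 : T2 α β γ 0 = α / 2 + α := by
    unfold T2
    rw [CR1_zero α β γ hα hβ hγ]
    rw [show γ - 2 * 0 = γ by ring, max_eq_left hβγ, max_eq_left hαβ]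
    ring
  have hTh : T2 α β γ (γ / 2) = α / 2 + (β + γ / 2) := by
    unfold T2
    rw [CR1_half α β γ hβ]
    have : γ - 2 * (γ / 2) = 0 := by ring
    rw [this, max_eq_left hβ.le, max_self]
    ring
  have hub : ∀ x ∈ Icc (0:ℝ) (γ / 2), T2 α β γ x ≤ α / 2 + max α (β + γ / 2) := by
    rintro x ⟨hx0, hx1⟩
    have hM1 : α ≤ max α (β + γ / 2) := le_max_left _ _
    have hM2 : β + γ / 2 ≤ max α (β + γ / 2) := le_max_right _ _
    have hcr := CR1_le α β γ hα hβ hγ h4 hβγ hαβ x hx0 hx1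
    unfold T2
    have : max (CR1 α β γ x) (max β (γ - 2 * x)) ≤ max α (β + γ / 2) - x := by
      apply max_le (by linarith)
      apply max_le (by linarith) (by linarith)
    linarith
  refine ⟨⟨?_, ?_⟩, fun h => ?_, fun h => ?_⟩
  · rcases le_total (β + γ / 2) α with h | h
    · refine ⟨0, ⟨le_refl 0, by linarith⟩, ?_⟩
      rw [hT0, max_eq_left h]
    · refine ⟨γ / 2, ⟨by linarith, le_refl _⟩, ?_⟩
      rw [hTh, max_eq_right h]
  · rintro y ⟨x, hx, rfl⟩
    exact hub x hx
  · rw [hT0, max_eq_left h]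
  · rw [hTh, max_eq_right h]
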